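/- Every graph class with bounded twin index has bounded or-pointer number and bounded and-pointer number: a graph with at most k twin classes has or-pointer number at most k and and-pointer number at most k. -/
import Mathlib


/-- Two vertices are twins if `N(u) \ {v} = N(v) \ {u}`. -/
def Twins {n : ℕ} (G : SimpleGraph (Fin n)) (u v : Fin n) : Prop :=
  G.neighborSet u \ {v} = G.neighborSet v \ {u}

/-- The twin index of `G` (number of classes of the twin equivalence relation)
is at most `k`. -/
def TwinIndexLe {n : ℕ} (G : SimpleGraph (Fin n)) (k : ℕ) : Prop :=
  ∃ f : Fin n → Fin k, ∀ u v, f u = f v → Twins G u v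

/-- The or-pointer number of `G` is at most `k`. -/
def OrPtrLe {n : ℕ} (G : SimpleGraph (Fin n)) (k : ℕ) : Prop :=
  ∃ (ι : Fin n → Fin n) (ℓ : Fin n → Fin k → Fin n),
    ∀ u v : Fin n, u ≠ v →
      (G.Adj u v ↔ (∃ i, ℓ v i = ι u) ∨ (∃ i, ℓ u i = ι v))

/-- The and-pointer number of `G` is at most `k`. -/
def AndPtrLe {n : ℕ} (G : SimpleGraph (Fin n)) (k : ℕ) : Prop :=
  ∃ (ι : Fin n → Fin n) (ℓ : Fin n → Fin k → Fin n),
    ∀ u v : Fin n, u ≠ v →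
      (G.Adj u v ↔ (∃ i, ℓ v i = ι u) ∧ (∃ i, ℓ u i = ι v))

section Aux

open Classical

variable {n k : ℕ} {G : SimpleGraph (Fin n)} {f : Fin n → Fin k}

lemma twins_adj {a b w : Fin n} (htw : Twins G a b) (hadj : G.Adj b w)
    (hne : a ≠ w) : G.Adj a w := by
  have hw : w ∈ G.neighborSet b \ {a} := ⟨hadj, fun hw => hne (by
    simpa using hw.symm)⟩
  rw [← htw] at hw
  exact hw.1

lemma class_adj (htw : ∀ u v, f u = f v → Twins G u v) {u v a b : Fin n}
    (h1 : f u = f a) (h2 : f v = f b) (hadj : G.Adj a b) (hne : u ≠ v) :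
    G.Adj u v := by
  by_cases hva : v = a
  · have hab : G.Adj b v := by rw [hva]; exact hadj.symm
    have hfub : f u = f b := by rw [h1, ← h2, hva]
    exact twins_adj (htw u b hfub) hab hne
  · have h3 : G.Adj v a := twins_adj (htw v b h2) hadj.symm hva
    exact twins_adj (htw u a h1) h3.symm hne

/-- class-to-class adjacency relation -/
def ClsRel (G : SimpleGraph (Fin n)) (f : Fin n → Fin k) (i j : Fin k) : Prop :=
  ∃ a b : Fin n, f a = i ∧ f b = j ∧ G.Adj a b

noncomputable def rep (f : Fin n → Fin k) (z : Fin n) (j : Fin k) : Fin n :=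
  if h : ∃ x, f x = j then h.choose else z

lemma rep_spec (z : Fin n) {j : Fin k} (h : ∃ x, f x = j) : f (rep f z j) = j := by
  rw [rep, dif_pos h]
  exact h.choose_spec

noncomputable def iota (G : SimpleGraph (Fin n)) (f : Fin n → Fin k)
    (z : Fin n) (u : Fin n) : Fin n :=
  if (∃ w, G.Adj u w) then rep f z (f u) else u

noncomputable def lab (G : SimpleGraph (Fin n)) (f : Fin n → Fin k)
    (z : Fin n) (v : Fin n) (i : Fin k) : Fin n :=
  if ClsRel G f i (f v) then rep f z i
  else if h : ∃ w, G.Adj v w then h.choose else v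

lemma key (htw : ∀ u v, f u = f v → Twins G u v) (z : Fin n) (u v : Fin n)
    (hne : u ≠ v) : G.Adj u v ↔ ∃ i, lab G f z v i = iota G f z u := by
  constructor
  · intro hadj
    refine ⟨f u, ?_⟩
    have hR : ClsRel G f (f u) (f v) := ⟨u, v, rfl, rfl, hadj⟩
    have hu : ∃ w, G.Adj u w := ⟨v, hadj⟩
    rw [lab, if_pos hR, iota, if_pos hu]
  · rintro ⟨i, hx⟩
    rw [lab] at hx
    by_cases hu : ∃ w, G.Adj u w
    · rw [iota, if_pos hu] at hx
      have hcls : ∃ x, f x = f u := ⟨u, rfl⟩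
      by_cases hR : ClsRel G f i (f v)
      · rw [if_pos hR] at hx
        obtain ⟨a, b, ha, hb, hadj⟩ := hR
        have hi : ∃ x, f x = i := ⟨a, ha⟩
        have : i = f u := by
          rw [← rep_spec z hi, hx, rep_spec z hcls]
        exact class_adj htw (ha.trans this).symm hb.symm hadj hne
      · rw [if_neg hR] at hx
        by_cases hv : ∃ w, G.Adj v w
        · rw [dif_pos hv] at hx
          have hw : G.Adj v hv.choose := hv.choose_spec
          have hfw : f hv.choose = f u := by rw [hx, rep_spec z hcls]
          exact class_adj htw hfw.symm rfl hw.symm hne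
        · rw [dif_neg hv] at hx
          -- v = rep of u's class, v isolated, u has a neighbor
          have hfv : f v = f u := by rw [hx, rep_spec z hcls]
          obtain ⟨w0, hw0⟩ := hu
          by_cases hwv : w0 = v
          · exact hwv ▸ hw0
          · have hmem : w0 ∈ G.neighborSet u \ {v} := ⟨hw0, fun hm => hwv (by
              simpa using hm)⟩
            rw [htw u v hfv.symm] at hmem
            exact absurd ⟨w0, hmem.1⟩ hv
    · rw [iota, if_neg hu] at hx
      by_cases hR : ClsRel G f i (f v)
      · rw [if_pos hR] at hx
        obtain ⟨a, b, ha, hb, hadj⟩ := hR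
        have hi : ∃ x, f x = i := ⟨a, ha⟩
        have : f u = i := by rw [← hx, rep_spec z hi]
        exact class_adj htw (ha.trans this.symm).symm hb.symm hadj hne
      · rw [if_neg hR] at hx
        by_cases hv : ∃ w, G.Adj v w
        · rw [dif_pos hv] at hx
          exact (hx ▸ hv.choose_spec).symm
        · rw [dif_neg hv] at hx
          exact absurd hx.symm hne

end Aux

/-- A graph with at most `k` twin classes has or-pointer number at most `k`
and and-pointer number at most `k`. -/
theorem stmt_8 (n k : ℕ) (G : SimpleGraph (Fin n)) (h : TwinIndexLe G k) :
    OrPtrLe G k ∧ AndPtrLe G k := by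
  obtain ⟨f, htw⟩ := h
  rcases Nat.eq_zero_or_pos n with hn | hn
  · subst hn
    exact ⟨⟨id, fun u _ => u, fun u => u.elim0⟩,
           ⟨id, fun u _ => u, fun u => u.elim0⟩⟩
  · set z : Fin n := ⟨0, hn⟩
    refine ⟨⟨iota G f z, lab G f z, fun u v hne => ?_⟩,
            ⟨iota G f z, lab G f z, fun u v hne => ?_⟩⟩
    · constructor
      · intro hadj
        exact Or.inl ((key htw z u v hne).1 hadj)
      · rintro (h' | h')
        · exact (key htw z u v hne).2 h'
        · exact ((key htw z v u hne.symm).2 h').symm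
    · constructor
      · intro hadj
        exact ⟨(key htw z u v hne).1 hadj, (key htw z v u hne.symm).1 hadj.symm⟩
      · rintro ⟨h', _⟩
        exact (key htw z u v hne).2 h'
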